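/- If there exists a nontrivial f-pyramidal Steiner triple system STS(v) over an abelian group G (with 0 < f < v), then G has order v − f, f equals the number of involutions of G, f = 2^m − 1 for some m ≥ 1, and v − 2f − 1 ≡ 0 (mod 6) whenever the associated difference family is relative to a partial spread of type {2^f, 3^0}. -/

import Mathlib

open scoped Classical

/-- The multiset of differences of a triple (finite subset) of an abelian group. -/
noncomputable def tripleDiffs {G : Type*} [AddCommGroup G] (T : Finset G) : Multiset G :=
  ((T ×ˢ T).filter (fun p => p.1 ≠ p.2)).val.map (fun p => p.1 - p.2)

/-- The multiset of differences of a family of triples. -/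
noncomputable def famDiffs {G : Type*} [AddCommGroup G] (F : Finset (Finset G)) : Multiset G :=
  F.val.bind tripleDiffs

lemma third_unique' {V : Type*} [DecidableEq V] {b : Finset V} (hb : b.card = 3)
    {a c z z' : V} (ha : a ∈ b) (hc : c ∈ b) (hac : a ≠ c)
    (hz : z ∈ b) (hz1 : z ≠ a) (hz2 : z ≠ c)
    (hz' : z' ∈ b) (hz'1 : z' ≠ a) (hz'2 : z' ≠ c) : z = z' := by
  have hsub : ({a, c} : Finset V) ⊆ b := by
    intro x hx
    rcases Finset.mem_insert.mp hx with h | h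
    · exact h ▸ ha
    · exact (Finset.mem_singleton.mp h) ▸ hc
  have hcard : (b \ {a, c}).card = 1 := by
    rw [Finset.card_sdiff_of_subset hsub, hb, Finset.card_pair hac]
  obtain ⟨w, hw⟩ := Finset.card_eq_one.mp hcard
  have h1 : z ∈ b \ ({a, c} : Finset V) := by
    simp [Finset.mem_sdiff, hz, hz1, hz2]
  have h2 : z' ∈ b \ ({a, c} : Finset V) := by
    simp [Finset.mem_sdiff, hz', hz'1, hz'2]
  rw [hw, Finset.mem_singleton] at h1 h2
  rw [h1, h2]

lemma third_exists' {V : Type*} [DecidableEq V] {b : Finset V} (hb : b.card = 3)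
    {a c : V} (ha : a ∈ b) (hc : c ∈ b) (hac : a ≠ c) :
    ∃ z, z ∈ b ∧ z ≠ a ∧ z ≠ c := by
  have hsub : ({a, c} : Finset V) ⊆ b := by
    intro x hx
    rcases Finset.mem_insert.mp hx with h | h
    · exact h ▸ ha
    · exact (Finset.mem_singleton.mp h) ▸ hc
  have hcard : (b \ {a, c}).card = 1 := by
    rw [Finset.card_sdiff_of_subset hsub, hb, Finset.card_pair hac]
  obtain ⟨w, hw⟩ := Finset.card_eq_one.mp hcard
  have hwmem : w ∈ b \ ({a, c} : Finset V) := by rw [hw]; exact Finset.mem_singleton_self w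
  rw [Finset.mem_sdiff, Finset.mem_insert, Finset.mem_singleton] at hwmem
  push_neg at hwmem
  exact ⟨w, hwmem.1, hwmem.2⟩

lemma pow_two_of_prime_divisors {n : ℕ} (h1 : 2 ≤ n)
    (h : ∀ p, Nat.Prime p → p ∣ n → p = 2) : ∃ m, 1 ≤ m ∧ n = 2 ^ m := by
  have hn : n ≠ 0 := by omega
  have hpow := Nat.eq_prime_pow_of_unique_prime_dvd hn (fun {d} hd hdvd => h d hd hdvd)
  refine ⟨n.primeFactorsList.length, ?_, hpow⟩
  by_contra hm
  have h0 : n.primeFactorsList.length = 0 := by omega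
  rw [h0, pow_zero] at hpow
  omega

/-- If there is a nontrivial `f`-pyramidal Steiner triple system `STS(v)` over an abelian
group `G` (the group acts as automorphisms, fixes exactly `f` points and is sharply
transitive on the remaining ones, `0 < f < v`), then `|G| = v − f`, `f` is the number of
involutions of `G`, `f = 2^m − 1` for some `m ≥ 1`, and whenever the associated difference
family is relative to a partial spread of type `{2^f, 3^0}` we get `6 ∣ v − 2f − 1`. -/
theorem stmt_19 {V : Type*} [Fintype V] [DecidableEq V]
    {G : Type*} [AddCommGroup G] [Fintype G] [AddAction G V]
    (v f : ℕ) (hv : Fintype.card V = v) (hf0 : 0 < f) (hfv : f < v)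
    (B : Finset (Finset V))
    (hSTS3 : ∀ b ∈ B, b.card = 3)
    (hSTSpair : ∀ x y : V, x ≠ y → ∃! b, b ∈ B ∧ x ∈ b ∧ y ∈ b)
    (hAut : ∀ g : G, ∀ b ∈ B, b.image (fun x => g +ᵥ x) ∈ B)
    (hfix : (Finset.univ.filter (fun x : V => ∀ g : G, g +ᵥ x = x)).card = f)
    (hsharp : ∀ x y : V, (¬ ∀ g : G, g +ᵥ x = x) → (¬ ∀ g : G, g +ᵥ y = y) →
      ∃! g : G, g +ᵥ x = y) :
    Fintype.card G = v - f ∧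
    f = (Finset.univ.filter (fun x : G => x ≠ 0 ∧ x + x = 0)).card ∧
    (∃ m : ℕ, 1 ≤ m ∧ f = 2 ^ m - 1) ∧
    (∀ (Sp : Finset (AddSubgroup G)) (F : Finset (Finset G)),
      (∀ S ∈ Sp, ∀ S' ∈ Sp, S ≠ S' → S ⊓ S' = ⊥) →
      (∀ S ∈ Sp, Nat.card ↥S = 2) → Sp.card = f →
      (∀ T ∈ F, T.card = 3) →
      famDiffs F = (Finset.univ.filter (fun g : G => ∀ S ∈ Sp, g ∉ S)).val →
      (6 : ℤ) ∣ ((v : ℤ) - 2 * (f : ℤ) - 1)) := by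
  set Fix : Finset V := Finset.univ.filter (fun x : V => ∀ g : G, g +ᵥ x = x) with hFixdef
  -- a non-fixed point exists
  have hex : ∃ x0 : V, ¬ ∀ g : G, g +ᵥ x0 = x0 := by
    by_contra h
    push_neg at h
    have hU : Fix = Finset.univ := by
      apply Finset.eq_univ_iff_forall.mpr
      intro x
      simp only [hFixdef, Finset.mem_filter, Finset.mem_univ, true_and]
      exact h x
    rw [hU, Finset.card_univ, hv] at hfix
    omega
  obtain ⟨x0, hx0⟩ := hex
  -- orbit elements are not fixed
  have hnf : ∀ g : G, ¬ ∀ h : G, h +ᵥ (g +ᵥ x0) = (g +ᵥ x0) := by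
    intro g hy
    apply hx0
    intro h
    have he : x0 = g +ᵥ x0 := by
      have := hy (-g)
      rwa [vadd_vadd, neg_add_cancel, zero_vadd] at this
    rw [he]
    exact hy h
  have hinj : ∀ g g' : G, g +ᵥ x0 = g' +ᵥ x0 → g = g' := by
    intro g g' h
    obtain ⟨u, _, huniq⟩ := hsharp x0 (g +ᵥ x0) hx0 (hnf g)
    exact (huniq g rfl).trans (huniq g' h.symm).symm
  -- Part A : card G = v - f
  have hcard : Fintype.card G = v - f := by
    have hb : (Finset.univ : Finset G).card = (Finset.univ \ Fix).card := by
      apply Finset.card_bij (fun g _ => g +ᵥ x0)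
      · intro g _
        simp only [Finset.mem_sdiff, Finset.mem_univ, true_and, hFixdef,
          Finset.mem_filter, not_and]
        exact hnf g
      · intro g _ g' _ h
        exact hinj g g' h
      · intro y hy
        simp only [Finset.mem_sdiff, Finset.mem_univ, true_and, hFixdef,
          Finset.mem_filter, not_and] at hy
        obtain ⟨g, hg, _⟩ := hsharp x0 y hx0 hy
        exact ⟨g, Finset.mem_univ g, hg⟩
    rw [← Finset.card_univ, hb, Finset.card_sdiff_of_subset (Finset.subset_univ Fix),
      Finset.card_univ, hv, hfix]
  -- a nonzero group element exists
  have hg2 : ∃ g : G, g ≠ 0 := by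
    by_contra h
    push_neg at h
    apply hx0
    intro g
    rw [h g, zero_vadd]
  have hmemFix : ∀ p : V, p ∈ Fix ↔ ∀ g : G, g +ᵥ p = p := by
    intro p; simp [hFixdef]
  have hfixne : ∀ p : V, (∀ g : G, g +ᵥ p = p) → ∀ g : G, g +ᵥ x0 ≠ p := by
    intro p hp g he
    exact (hnf g) (by rw [he]; exact hp)
  have hneqx0 : ∀ p : V, (∀ g : G, g +ᵥ p = p) → p ≠ x0 := by
    intro p hp he
    exact hx0 (he ▸ hp)
  -- two points determine the block
  have blockEq : ∀ (x y : V), x ≠ y → ∀ b1 ∈ B, ∀ b2 ∈ B,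
      x ∈ b1 → y ∈ b1 → x ∈ b2 → y ∈ b2 → b1 = b2 := by
    intro x y hxy b1 hb1 b2 hb2 h1 h2 h3 h4
    obtain ⟨b', _, hu⟩ := hSTSpair x y hxy
    rw [hu b1 ⟨hb1, h1, h2⟩, hu b2 ⟨hb2, h3, h4⟩]
  -- key: the block through a fixed point p and x0 yields an involution
  have key : ∀ p ∈ Fix, ∃ g : G, (g ≠ 0 ∧ g + g = 0) ∧
      ∃ b ∈ B, p ∈ b ∧ x0 ∈ b ∧ g +ᵥ x0 ∈ b := by
    intro p hp
    rw [hmemFix] at hp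
    have hpx0 : p ≠ x0 := hneqx0 p hp
    obtain ⟨b, ⟨hbB, hpb, hx0b⟩, _⟩ := hSTSpair p x0 hpx0
    have hb3 : b.card = 3 := hSTS3 b hbB
    obtain ⟨z, hzb, hzp, hzx0⟩ := third_exists' hb3 hpb hx0b hpx0
    have hpz : p ≠ z := Ne.symm hzp
    -- z is not fixed
    have hznf : ¬ ∀ h : G, h +ᵥ z = z := by
      intro hzf
      obtain ⟨g, hgne⟩ := hg2
      have hgb : b.image (fun x => g +ᵥ x) = b :=
        blockEq p z hpz _ (hAut g b hbB) b hbB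
          (Finset.mem_image.mpr ⟨p, hpb, hp g⟩)
          (Finset.mem_image.mpr ⟨z, hzb, hzf g⟩) hpb hzb
      have hgx0 : g +ᵥ x0 ∈ b := by
        rw [← hgb]; exact Finset.mem_image.mpr ⟨x0, hx0b, rfl⟩
      have h1 : g +ᵥ x0 ≠ p := hfixne p hp g
      have h2 : g +ᵥ x0 ≠ z := hfixne z hzf g
      have h3 : g +ᵥ x0 ≠ x0 := fun he => hgne (hinj g 0 (by rw [he, zero_vadd]))
      exact h2 (third_unique' hb3 hpb hx0b hpx0 hgx0 h1 h3 hzb hzp hzx0)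
    obtain ⟨g, hgz, _⟩ := hsharp x0 z hx0 hznf
    have hgne : g ≠ 0 := fun h0 => hzx0 (by rw [← hgz, h0, zero_vadd])
    have hgb : b.image (fun x => g +ᵥ x) = b :=
      blockEq p z hpz _ (hAut g b hbB) b hbB
        (Finset.mem_image.mpr ⟨p, hpb, hp g⟩)
        (Finset.mem_image.mpr ⟨x0, hx0b, hgz⟩) hpb hzb
    have hgzb : g +ᵥ z ∈ b := by
      rw [← hgb]; exact Finset.mem_image.mpr ⟨z, hzb, rfl⟩
    have hq : g +ᵥ z = (g + g) +ᵥ x0 := by rw [← hgz, vadd_vadd]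
    have h1 : g +ᵥ z ≠ p := by rw [hq]; exact hfixne p hp (g + g)
    have h2 : g +ᵥ z ≠ z := by
      intro he
      obtain ⟨u, _, huu⟩ := hsharp z z hznf hznf
      exact hgne ((huu g he).trans (huu 0 (zero_vadd _ _)).symm)
    have he : g +ᵥ z = x0 :=
      third_unique' hb3 hpb hzb hpz hgzb h1 h2 hx0b (Ne.symm hpx0) (Ne.symm hzx0)
    have hgg : g + g = 0 := hinj (g + g) 0 (by rw [← hq, he, zero_vadd])
    exact ⟨g, ⟨hgne, hgg⟩, b, hbB, hpb, hx0b, by rw [hgz]; exact hzb⟩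
  -- uniqueness: the fixed point is determined by the involution
  have uniq : ∀ g : G, g ≠ 0 → ∀ p q : V, p ∈ Fix → q ∈ Fix →
      (∃ b ∈ B, p ∈ b ∧ x0 ∈ b ∧ g +ᵥ x0 ∈ b) →
      (∃ b ∈ B, q ∈ b ∧ x0 ∈ b ∧ g +ᵥ x0 ∈ b) → p = q := by
    rintro g hg p q hp hq ⟨b1, hb1, hpb1, hx0b1, hgb1⟩ ⟨b2, hb2, hqb2, hx0b2, hgb2⟩
    rw [hmemFix] at hp hq
    have hne : x0 ≠ g +ᵥ x0 := fun he => hg (hinj g 0 (by rw [zero_vadd, ← he]))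
    have hbe : b1 = b2 := blockEq x0 (g +ᵥ x0) hne b1 hb1 b2 hb2 hx0b1 hgb1 hx0b2 hgb2
    exact third_unique' (hSTS3 b1 hb1) hx0b1 hgb1 hne hpb1 (hneqx0 p hp)
      (Ne.symm (hfixne p hp g)) (hbe ▸ hqb2) (hneqx0 q hq) (Ne.symm (hfixne q hq g))
  -- surjectivity: every involution arises from a fixed point
  have psi : ∀ g : G, g ≠ 0 → g + g = 0 →
      ∃ p, p ∈ Fix ∧ ∃ b ∈ B, p ∈ b ∧ x0 ∈ b ∧ g +ᵥ x0 ∈ b := by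
    intro g hg hgg
    have hne : x0 ≠ g +ᵥ x0 := fun he => hg (hinj g 0 (by rw [zero_vadd, ← he]))
    obtain ⟨b, ⟨hbB, hx0b, hyb⟩, _⟩ := hSTSpair x0 (g +ᵥ x0) hne
    have hb3 : b.card = 3 := hSTS3 b hbB
    obtain ⟨z, hzb, hzx0, hzy⟩ := third_exists' hb3 hx0b hyb hne
    have hx0img : x0 ∈ b.image (fun x => g +ᵥ x) :=
      Finset.mem_image.mpr ⟨g +ᵥ x0, hyb, by rw [vadd_vadd, hgg, zero_vadd]⟩
    have hgb : b.image (fun x => g +ᵥ x) = b :=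
      blockEq x0 (g +ᵥ x0) hne _ (hAut g b hbB) b hbB hx0img
        (Finset.mem_image.mpr ⟨x0, hx0b, rfl⟩) hx0b hyb
    have hgzb : g +ᵥ z ∈ b := by
      rw [← hgb]; exact Finset.mem_image.mpr ⟨z, hzb, rfl⟩
    have h1 : g +ᵥ z ≠ x0 := by
      intro he
      apply hzy
      have : g +ᵥ z = g +ᵥ (g +ᵥ x0) := by rw [he, vadd_vadd, hgg, zero_vadd]
      exact vadd_left_cancel g this
    have h2 : g +ᵥ z ≠ g +ᵥ x0 := fun he => hzx0 (vadd_left_cancel g he)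
    have h3 : g +ᵥ z = z :=
      third_unique' hb3 hx0b hyb hne hgzb h1 h2 hzb hzx0 hzy
    have hzf : ∀ h : G, h +ᵥ z = z := by
      by_contra hc
      obtain ⟨u, _, huu⟩ := hsharp z z hc hc
      exact hg ((huu g h3).trans (huu 0 (zero_vadd _ _)).symm)
    exact ⟨z, (hmemFix z).mpr hzf, b, hbB, hzb, hx0b, hyb⟩
  -- Part B : f = number of involutions
  have hf_inv : f = (Finset.univ.filter (fun x : G => x ≠ 0 ∧ x + x = 0)).card := by
    rw [← hfix]
    apply Finset.card_bij (fun p hp => (key p hp).choose)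
    · intro p hp
      obtain ⟨⟨h1, h2⟩, _⟩ := (key p hp).choose_spec
      simp only [Finset.mem_filter, Finset.mem_univ, true_and]
      exact ⟨h1, h2⟩
    · intro p hp q hq he
      obtain ⟨⟨h1, _⟩, hb1⟩ := (key p hp).choose_spec
      obtain ⟨⟨_, _⟩, hb2⟩ := (key q hq).choose_spec
      rw [← he] at hb2
      exact uniq _ h1 p q hp hq hb1 hb2
    · intro g hg
      simp only [Finset.mem_filter, Finset.mem_univ, true_and] at hg
      obtain ⟨p, hpF, b', hb'B, hpb', hx0b', hgb'⟩ := psi g hg.1 hg.2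
      refine ⟨p, hpF, ?_⟩
      obtain ⟨⟨hg'ne, _⟩, b, hbB, hpb, hx0b, hgb⟩ := (key p hpF).choose_spec
      set g' := (key p hpF).choose
      have hpx0 : p ≠ x0 := hneqx0 p ((hmemFix p).mp hpF)
      have hbe : b = b' := blockEq p x0 hpx0 b hbB b' hb'B hpb hx0b hpb' hx0b'
      have hpFix := (hmemFix p).mp hpF
      have h1 : g' +ᵥ x0 ≠ p := hfixne p hpFix g'
      have h2 : g' +ᵥ x0 ≠ x0 := fun he => hg'ne (hinj g' 0 (by rw [he, zero_vadd]))
      have h3 : g +ᵥ x0 ≠ p := hfixne p hpFix g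
      have h4 : g +ᵥ x0 ≠ x0 := fun he => hg.1 (hinj g 0 (by rw [he, zero_vadd]))
      have : g' +ᵥ x0 = g +ᵥ x0 :=
        third_unique' (hSTS3 b hbB) hpb hx0b hpx0 hgb h1 h2 (hbe ▸ hgb') h3 h4
      exact hinj g' g this
  -- Part C : f + 1 is a power of two
  have hT : (Finset.univ.filter (fun x : G => x + x = 0)).card = f + 1 := by
    have hins : Finset.univ.filter (fun x : G => x + x = 0) =
        insert 0 (Finset.univ.filter (fun x : G => x ≠ 0 ∧ x + x = 0)) := by
      ext x
      simp only [Finset.mem_filter, Finset.mem_univ, true_and, Finset.mem_insert]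
      constructor
      · intro hx
        by_cases h : x = 0
        · exact Or.inl h
        · exact Or.inr ⟨h, hx⟩
      · rintro (rfl | ⟨_, hx⟩)
        · exact add_zero 0
        · exact hx
    rw [hins, Finset.card_insert_of_notMem (by simp), ← hf_inv]
  have hprime : ∀ p : ℕ, Nat.Prime p → p ∣ f + 1 → p = 2 := by
    intro p hp hdvd
    haveI : Fact p.Prime := ⟨hp⟩
    set H : AddSubgroup G :=
      { carrier := {x : G | x + x = 0}
        zero_mem' := by simp
        add_mem' := by
          intro a b ha hb
          simp only [Set.mem_setOf_eq] at *
          have : a + b + (a + b) = (a + a) + (b + b) := by abel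
          rw [this, ha, hb, add_zero]
        neg_mem' := by
          intro a ha
          simp only [Set.mem_setOf_eq] at *
          rw [← neg_add, ha, neg_zero] } with hHdef
    have hHcard : Fintype.card H = f + 1 := by
      rw [← hT, Fintype.card_subtype]
      congr 1
    rw [← hHcard] at hdvd
    obtain ⟨x, hx⟩ := exists_prime_addOrderOf_dvd_card (G := H) p hdvd
    have hx2 : x + x = 0 := by
      apply Subtype.ext
      exact x.2
    have hdvd2 : addOrderOf x ∣ 2 :=
      addOrderOf_dvd_of_nsmul_eq_zero (by rw [two_nsmul, hx2])
    rw [hx] at hdvd2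
    exact (Nat.prime_dvd_prime_iff_eq hp Nat.prime_two).mp hdvd2
  obtain ⟨m, hm1, hm⟩ := pow_two_of_prime_divisors (by omega) hprime
  refine ⟨hcard, hf_inv, ⟨m, hm1, by omega⟩, ?_⟩
  -- Part D : counting
  intro Sp F hSpInt hSp2 hSpcard hF3 hdiff
  have hchoice : ∀ S : AddSubgroup G, S ∈ Sp →
      ∃ s : G, s ≠ 0 ∧ ∀ t : G, t ∈ S ↔ (t = 0 ∨ t = s) := by
    intro S hS
    have h2 : (Finset.univ.filter (fun x : G => x ∈ S)).card = 2 := by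
      rw [← Fintype.card_subtype, ← Nat.card_eq_fintype_card]
      exact hSp2 S hS
    obtain ⟨a, b, hab, hab2⟩ := Finset.card_eq_two.mp h2
    have hmem : ∀ t : G, t ∈ S ↔ t = a ∨ t = b := by
      intro t
      constructor
      · intro ht
        have : t ∈ Finset.univ.filter (fun x : G => x ∈ S) := by simp [ht]
        rw [hab2] at this
        simpa using this
      · intro ht
        have : t ∈ ({a, b} : Finset G) := by simpa using ht
        rw [← hab2] at this
        simpa using this
    rcases (hmem 0).mp (zero_mem S) with h0 | h0
    · refine ⟨b, fun hb => hab (by rw [← h0, hb]), fun t => by rw [hmem t, ← h0]⟩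
    · refine ⟨a, fun ha => hab (by rw [← h0, ha]), fun t => by rw [hmem t, ← h0]; tauto⟩
  set U : Finset G := Finset.univ.filter (fun g : G => ∃ S ∈ Sp, g ∈ S) with hUdef
  have hSpne : Sp.Nonempty := by
    rw [← Finset.card_pos, hSpcard]; exact hf0
  have hUcard : U.card = f + 1 := by
    have him : U = insert 0 (Sp.attach.image (fun S => (hchoice S.1 S.2).choose)) := by
      ext g
      simp only [hUdef, Finset.mem_filter, Finset.mem_univ, true_and, Finset.mem_insert,
        Finset.mem_image, Finset.mem_attach, true_and]
      constructor
      · rintro ⟨S, hS, hgS⟩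
        rcases ((hchoice S hS).choose_spec.2 g).mp hgS with h | h
        · exact Or.inl h
        · exact Or.inr ⟨⟨S, hS⟩, h.symm⟩
      · rintro (rfl | ⟨⟨S, hS⟩, rfl⟩)
        · exact ⟨hSpne.choose, hSpne.choose_spec, zero_mem _⟩
        · exact ⟨S, hS, ((hchoice S hS).choose_spec.2 _).mpr (Or.inr rfl)⟩
    have hnot0 : (0 : G) ∉ Sp.attach.image (fun S => (hchoice S.1 S.2).choose) := by
      simp only [Finset.mem_image, Finset.mem_attach, true_and, not_exists]
      rintro ⟨S, hS⟩ h
      exact (hchoice S hS).choose_spec.1 h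
    have hinjOn : Set.InjOn (fun S : {x // x ∈ Sp} => (hchoice S.1 S.2).choose)
        (Sp.attach : Finset {x // x ∈ Sp}) := by
      rintro ⟨S, hS⟩ _ ⟨S', hS'⟩ _ he
      simp only at he
      by_contra hne
      have hSS' : S ≠ S' := fun h => hne (by simp [h])
      have hbot := hSpInt S hS S' hS' hSS'
      have h1 : (hchoice S hS).choose ∈ S :=
        ((hchoice S hS).choose_spec.2 _).mpr (Or.inr rfl)
      have h2 : (hchoice S hS).choose ∈ S' := by
        rw [he]; exact ((hchoice S' hS').choose_spec.2 _).mpr (Or.inr rfl)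
      have : (hchoice S hS).choose ∈ S ⊓ S' := ⟨h1, h2⟩
      rw [hbot] at this
      exact (hchoice S hS).choose_spec.1 this
    rw [him, Finset.card_insert_of_notMem hnot0, Finset.card_image_of_injOn hinjOn,
      Finset.card_attach, hSpcard]
  have hC : Finset.univ.filter (fun g : G => ∀ S ∈ Sp, g ∉ S) = Finset.univ \ U := by
    ext g
    simp only [Finset.mem_filter, Finset.mem_univ, true_and, Finset.mem_sdiff, hUdef,
      not_exists]
    tauto
  have hCcard : (Finset.univ.filter (fun g : G => ∀ S ∈ Sp, g ∉ S)).card =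
      Fintype.card G - (f + 1) := by
    rw [hC, Finset.card_sdiff_of_subset (Finset.subset_univ U), Finset.card_univ, hUcard]
  -- cardinality of the difference multiset
  have hFD : Multiset.card (famDiffs F) = 6 * F.card := by
    rw [famDiffs, Multiset.card_bind]
    have hsix : ∀ T ∈ F, Multiset.card (tripleDiffs T) = 6 := by
      intro T hT
      rw [tripleDiffs, Multiset.card_map]
      change ((T ×ˢ T).filter (fun p => p.1 ≠ p.2)).card = 6
      have h9 : (T ×ˢ T).card = 9 := by
        rw [Finset.card_product, hF3 T hT]
      have hdiag : ((T ×ˢ T).filter (fun p => p.1 = p.2)).card = 3 := by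
        have himg : (T ×ˢ T).filter (fun p => p.1 = p.2) =
            T.image (fun x => (x, x)) := by
          ext p
          simp only [Finset.mem_filter, Finset.mem_product, Finset.mem_image]
          constructor
          · rintro ⟨⟨h1, h2⟩, h3⟩
            exact ⟨p.1, h1, Prod.ext_iff.mpr ⟨rfl, h3⟩⟩
          · rintro ⟨x, hx, rfl⟩
            exact ⟨⟨hx, hx⟩, rfl⟩
        rw [himg, Finset.card_image_of_injective _ (fun a b h => (Prod.mk.injEq _ _ _ _).mp h |>.1),
          hF3 T hT]
      have hsd : (T ×ˢ T).filter (fun p => p.1 ≠ p.2) =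
          (T ×ˢ T) \ (T ×ˢ T).filter (fun p => p.1 = p.2) :=
        Finset.filter_not _ _
      rw [hsd, Finset.card_sdiff_of_subset (Finset.filter_subset _ _), h9, hdiag]
    have : (F.val.map (Multiset.card ∘ tripleDiffs)).sum =
        ∑ T ∈ F, Multiset.card (tripleDiffs T) := rfl
    rw [this, Finset.sum_congr rfl hsix, Finset.sum_const, smul_eq_mul, mul_comm]
  have hfinal : 6 * F.card = Fintype.card G - (f + 1) := by
    rw [← hFD, hdiff]
    exact hCcard
  have hle : f + 1 ≤ Fintype.card G := by
    rw [← hUcard, ← Finset.card_univ]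
    exact Finset.card_le_card (Finset.subset_univ U)
  refine ⟨(F.card : ℤ), ?_⟩
  omega
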